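/- Let q be a self-join-free Boolean conjunctive query, G an atom and y a variable of q with G attacks y, and x a variable with FD(q \ {G}) ⊨ x → y. Then G attacks x. -/

import Mathlib

/-- A fact `R(a₁,…,aₙ)`: relation name, primary-key values, non-key values. -/
structure DBFact where
  rel : ℕ
  key : List ℕ
  rest : List ℕ
deriving DecidableEq

/-- Two facts are key-equal if they have the same relation name and primary-key value. -/
def keyEq (A B : DBFact) : Prop := A.rel = B.rel ∧ A.key = B.key

instance (A B : DBFact) : Decidable (keyEq A B) :=
  inferInstanceAs (Decidable (_ ∧ _))

/-- A set of facts is consistent if it contains no two distinct key-equal facts. -/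
def Consistent (s : Finset DBFact) : Prop := ∀ A ∈ s, ∀ B ∈ s, keyEq A B → A = B

/-- A repair of `db` is a maximal (w.r.t. ⊆) consistent subset of `db`. -/
def Repair (db r : Finset DBFact) : Prop :=
  r ⊆ db ∧ Consistent r ∧ ∀ r', r' ⊆ db → Consistent r' → r ⊆ r' → r = r'

/-- A term is a variable (inl) or a constant (inr). -/
abbrev Term := ℕ ⊕ ℕ

/-- An atom `R(t₁,…,tₙ)` with key positions and non-key positions. -/
structure Atom where
  rel : ℕ
  key : List Term
  rest : List Term
deriving DecidableEq

def termVars (l : List Term) : Finset ℕ := (l.filterMap fun t => t.getLeft?).toFinset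

/-- Variables at primary-key positions of an atom. -/
def keyVars (F : Atom) : Finset ℕ := termVars F.key

/-- All variables of an atom. -/
def atomVars (F : Atom) : Finset ℕ := termVars F.key ∪ termVars F.rest

/-- A query (finite set of atoms) is self-join-free: no relation name occurs twice. -/
def SJF (q : Finset Atom) : Prop := ∀ F ∈ q, ∀ G ∈ q, F.rel = G.rel → F = G

/-- Apply a valuation (total map from variables to constants) to an atom, yielding a fact. -/
def applyVal (θ : ℕ → ℕ) (F : Atom) : DBFact :=
  ⟨F.rel, F.key.map (Sum.elim θ id), F.rest.map (Sum.elim θ id)⟩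

/-- Semantic implication of a functional dependency `X → Y` by a set of FDs
(two-tuple semantics, which is equivalent to the standard one for FDs). -/
def FDImplies (fds : Set (Set ℕ × Set ℕ)) (X Y : Set ℕ) : Prop :=
  ∀ θ μ : ℕ → ℕ,
    (∀ p ∈ fds, (∀ v ∈ p.1, θ v = μ v) → ∀ v ∈ p.2, θ v = μ v) →
    (∀ v ∈ X, θ v = μ v) → ∀ v ∈ Y, θ v = μ v

/-- `FD(q) = { key(F) → vars(F) : F ∈ q }`. -/
def FDs (q : Finset Atom) : Set (Set ℕ × Set ℕ) :=
  {p | ∃ F ∈ q, p = ((keyVars F : Set ℕ), (atomVars F : Set ℕ))}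

/-- `F⁺ = { x : FD(q \ {F}) ⊨ key(F) → x }`. -/
def plus (q : Finset Atom) (F : Atom) : Set ℕ :=
  {x | FDImplies (FDs (q.erase F)) (keyVars F : Set ℕ) {x}}

/-- One step of a witness for an attack by `F`: consecutive atoms share a variable outside `F⁺`. -/
def AttackStep (q : Finset Atom) (F : Atom) (A B : Atom) : Prop :=
  ¬ ((atomVars A ∩ atomVars B : Finset ℕ) : Set ℕ) ⊆ plus q F

/-- `F` attacks `G` in the attack graph of `q`. -/
def Attacks (q : Finset Atom) (F G : Atom) : Prop :=
  F ≠ G ∧ F ∈ q ∧ ∃ L : List Atom, (∀ A ∈ L, A ∈ q) ∧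
    List.Chain (AttackStep q F) F L ∧ (F :: L).getLast (List.cons_ne_nil F L) = G

/-- `F` attacks the variable `z`. -/
def AttacksVar (q : Finset Atom) (F : Atom) (z : ℕ) : Prop :=
  z ∉ plus q F ∧ F ∈ q ∧ ∃ L : List Atom, (∀ A ∈ L, A ∈ q) ∧
    List.Chain (AttackStep q F) F L ∧ z ∈ atomVars ((F :: L).getLast (List.cons_ne_nil F L))

/-- `r ⊨ ζ(q)` for a valuation `ζ` over the variable set `X`. -/
def Sat (r : Finset DBFact) (q : Finset Atom) (X : Finset ℕ) (ζ : ℕ → ℕ) : Prop :=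
  ∃ θ : ℕ → ℕ, (∀ v ∈ X, θ v = ζ v) ∧ ∀ F ∈ q, applyVal θ F ∈ r

/-- `r ⊨ q`. -/
def Sat0 (r : Finset DBFact) (q : Finset Atom) : Prop :=
  ∃ θ : ℕ → ℕ, ∀ F ∈ q, applyVal θ F ∈ r

/-- A fact `A` is relevant for `q` in `r` if `A ∈ θ(q) ⊆ r` for some valuation `θ`. -/
def Relevant (A : DBFact) (q : Finset Atom) (r : Finset DBFact) : Prop :=
  ∃ θ : ℕ → ℕ, (∃ F ∈ q, applyVal θ F = A) ∧ ∀ F ∈ q, applyVal θ F ∈ r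

/-- Link relation between atoms of `q \ {G}`: both belong and they share a
variable outside `G⁺`. -/
def Link (q : Finset Atom) (G : Atom) (A B : Atom) : Prop :=
  A ∈ q.erase G ∧ B ∈ q.erase G ∧ AttackStep q G A B

lemma link_symm (q : Finset Atom) (G : Atom) : Symmetric (Link q G) := by
  rintro a b ⟨h1, h2, h3⟩
  refine ⟨h2, h1, fun hsub => h3 ?_⟩
  rwa [Finset.inter_comm] at hsub

lemma keyVars_subset_atomVars (F : Atom) : keyVars F ⊆ atomVars F :=
  Finset.subset_union_left

lemma chain_link_mem {q : Finset Atom} {G : Atom} :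
    ∀ {B : Atom} {C : List Atom}, List.Chain (Link q G) B C → ∀ c ∈ C, c ∈ q.erase G := by
  intro B C
  induction C generalizing B with
  | nil => intro _ c hc; simp at hc
  | cons d t ih =>
    intro h c hc
    obtain ⟨hBd, ht⟩ := List.isChain_cons_cons.mp h
    rcases List.mem_cons.mp hc with rfl | hc
    · exact hBd.2.1
    · exact ih ht c hc

lemma chain_append_link {α : Type*} {R : α → α → Prop} :
    ∀ {a : α} (l : List α) {b : α} {l' : List α}, List.Chain R a l →
      R ((a :: l).getLast (List.cons_ne_nil a l)) b → List.Chain R b l' →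
      List.Chain R a (l ++ b :: l') := by
  intro a l
  induction l generalizing a with
  | nil => intro b l' _ hR h'; exact List.Chain.cons hR h'
  | cons c t ih =>
    intro b l' h hR h'
    obtain ⟨hac, ht⟩ := List.isChain_cons_cons.mp h
    exact List.Chain.cons hac (ih ht hR h')

/-- Witness construction: if `FD(q \ {G}) ⊨ x → y`, `y ∉ G⁺` and `x ≠ y`, then
there is a chain of atoms of `q \ {G}` from an atom containing `x` to an atom
containing `y`, consecutive atoms sharing a variable outside `G⁺`. -/
lemma reach_of_imp (q : Finset Atom) (G : Atom) (x y : ℕ)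
    (hy : y ∉ plus q G) (hxy : x ≠ y)
    (himp : FDImplies (FDs (q.erase G)) {x} {y}) :
    ∃ A B : Atom, A ∈ q.erase G ∧ B ∈ q.erase G ∧ x ∈ atomVars A ∧ y ∈ atomVars B ∧
      Relation.ReflTransGen (Link q G) A B := by
  classical
  by_contra hno
  have hy' : ¬ FDImplies (FDs (q.erase G)) (keyVars G : Set ℕ) {y} := hy
  rw [FDImplies] at hy'
  push_neg at hy'
  obtain ⟨θ, μ₀, hresp, hkey, v, hv, hne⟩ := hy'
  have hveq : v = y := hv
  rw [hveq] at hne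
  -- the set of variables where we "copy" θ
  set S : ℕ → Prop := fun w => w = x ∨ ∃ B ∈ q.erase G,
      (∃ A ∈ q.erase G, x ∈ atomVars A ∧ Relation.ReflTransGen (Link q G) A B) ∧
      w ∈ atomVars B with hS
  set μ : ℕ → ℕ := fun w => if S w then θ w else μ₀ w with hμ
  have hplus : ∀ w ∈ plus q G, θ w = μ₀ w := fun w hw => hw θ μ₀ hresp hkey w rfl
  -- on non-reachable atoms, μ coincides with μ₀
  have hSsub : ∀ H ∈ q.erase G,
      (¬ ∃ A ∈ q.erase G, x ∈ atomVars A ∧ Relation.ReflTransGen (Link q G) A H) →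
      ∀ w ∈ atomVars H, μ w = μ₀ w := by
    intro H hH hnr w hw
    show (if S w then θ w else μ₀ w) = μ₀ w
    split_ifs with hSw
    · rcases hSw with rfl | ⟨B, hB, hreach, hwB⟩
      · exact absurd ⟨H, hH, hw, Relation.ReflTransGen.refl⟩ hnr
      · by_cases hwp : w ∈ plus q G
        · exact hplus w hwp
        · exfalso
          apply hnr
          obtain ⟨A, hA, hxA, hAB⟩ := hreach
          refine ⟨A, hA, hxA, hAB.tail ⟨hB, hH, fun hsub => hwp (hsub ?_)⟩⟩
          exact Finset.mem_coe.mpr (Finset.mem_inter.mpr ⟨hwB, hw⟩)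
    · rfl
  -- (θ, μ) respects all FDs of q \ {G}
  have hresp' : ∀ p ∈ FDs (q.erase G), (∀ w ∈ p.1, θ w = μ w) → ∀ w ∈ p.2, θ w = μ w := by
    rintro p ⟨H, hH, rfl⟩
    by_cases hr : ∃ A ∈ q.erase G, x ∈ atomVars A ∧ Relation.ReflTransGen (Link q G) A H
    · intro _ w hw
      show θ w = if S w then θ w else μ₀ w
      rw [if_pos (Or.inr ⟨H, hH, hr, Finset.mem_coe.mp hw⟩)]
    · intro hkeyAg w hw
      have hμeq : ∀ u ∈ atomVars H, μ u = μ₀ u := hSsub H hH hr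
      have hkey0 : ∀ u ∈ (keyVars H : Set ℕ), θ u = μ₀ u := by
        intro u hu
        rw [← hμeq u (keyVars_subset_atomVars H (Finset.mem_coe.mp hu))]
        exact hkeyAg u hu
      have h := hresp ((keyVars H : Set ℕ), (atomVars H : Set ℕ)) ⟨H, hH, rfl⟩ hkey0 w hw
      rw [hμeq w (Finset.mem_coe.mp hw)]
      exact h
  have hx : θ x = μ x := by
    show θ x = if S x then θ x else μ₀ x
    rw [if_pos (Or.inl rfl)]
  have hyy : θ y = μ y := himp θ μ hresp'
    (fun w hw => by
      have : w = x := hw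
      subst this; exact hx) y rfl
  have hSy : ¬ S y := by
    rintro (rfl | ⟨B, hB, ⟨A, hA, hxA, hAB⟩, hyB⟩)
    · exact hxy rfl
    · exact hno ⟨A, B, hA, hB, hxA, hyB, hAB⟩
  rw [hμ] at hyy
  simp only [if_neg hSy] at hyy
  exact hne hyy
/-- If `G` attacks `y` and `FD(q \ {G}) ⊨ x → y`, then `G` attacks `x`. -/
theorem attack_backpropagation (q : Finset Atom) (hq : SJF q) (G : Atom) (hG : G ∈ q)
    (x y : ℕ) (hatt : AttacksVar q G y)
    (himp : FDImplies (FDs (q.erase G)) {x} {y}) :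
    AttacksVar q G x := by
  by_cases hxy : x = y
  · subst hxy; exact hatt
  obtain ⟨hyP, hGq, L, hLq, hchain, hylast⟩ := hatt
  -- x ∉ G⁺
  have hxP : x ∉ plus q G := by
    intro hx
    apply hyP
    intro θ μ hresp hkey w hw
    have hwy : w = y := hw
    have hθx : θ x = μ x := hx θ μ hresp hkey x rfl
    have h := himp θ μ hresp (fun u hu => by rw [show u = x from hu]; exact hθx) y rfl
    rwa [hwy]
  obtain ⟨A, B, hA, hB, hxA, hyB, hAB⟩ := reach_of_imp q G x y hyP hxy himp
  have hBA : Relation.ReflTransGen (Link q G) B A :=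
    (@Relation.ReflTransGen.symmetric _ _ ⟨fun a b h => link_symm q G h⟩).symm _ _ hAB
  obtain ⟨C, hCchain, hClast⟩ := List.exists_isChain_cons_of_relationReflTransGen hBA
  have hstep : AttackStep q G ((G :: L).getLast (List.cons_ne_nil G L)) B := by
    intro hsub
    exact hyP (hsub (Finset.mem_coe.mpr (Finset.mem_inter.mpr ⟨hylast, hyB⟩)))
  refine ⟨hxP, hGq, L ++ B :: C, ?_, ?_, ?_⟩
  · intro a ha
    rcases List.mem_append.mp ha with ha | ha
    · exact hLq a ha
    · rcases List.mem_cons.mp ha with rfl | ha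
      · exact Finset.mem_of_mem_erase hB
      · exact Finset.mem_of_mem_erase (chain_link_mem hCchain a ha)
  · exact chain_append_link L hchain hstep (List.Chain.imp (fun a b h => h.2.2) hCchain)
  · have hl : ((G :: L) ++ (B :: C)).getLast
        (List.append_ne_nil_of_right_ne_nil _ (List.cons_ne_nil B C)) = A := by
      rw [List.getLast_append_of_ne_nil _ (List.cons_ne_nil B C)]
      exact hClast
    have : (G :: (L ++ B :: C)).getLast (List.cons_ne_nil _ _) = A := hl
    rw [this]
    exact hxA
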